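/- For cuts Λ, Λ', Γ of an ordered abelian group and naturals i, j, k, m, d with i, j, k < m and i + j = m + d: (Λ − iΓ) + (Λ' − jΓ) + (mΓ − kΓ) ≤ (Λ + Λ') − (d+k)Γ. -/

import Mathlib

set_option autoImplicit false

universe u v

/-- A Dedekind cut of a linearly ordered abelian group, represented by its left part
(`L = Λ^L`); the right part is the complement of `L`.  The cuts `-∞` (`L = ∅`) and
`+∞` (`L = G`) are included. -/
structure Cut (G : Type u) [AddCommGroup G] [LinearOrder G] [IsOrderedAddMonoid G] : Type u where
  L : Set G
  lower : ∀ ⦃x y : G⦄, y ∈ L → x ≤ y → x ∈ L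

namespace Cut

variable {G : Type u} [AddCommGroup G] [LinearOrder G] [IsOrderedAddMonoid G]

/-- Cuts are ordered by inclusion of left parts. -/
instance : PartialOrder (Cut G) where
  le Λ Γ := Λ.L ⊆ Γ.L
  le_refl _ := subset_rfl
  le_trans _ _ _ h h' := fun x hx => h' (h hx)
  le_antisymm := by
    rintro ⟨L₁, h₁⟩ ⟨L₂, h₂⟩ h h'
    simpa using Set.Subset.antisymm h h'

/-- `γ⁻`, the cut with left part `(-∞, γ)`. -/
def lcut (γ : G) : Cut G := ⟨{x | x < γ}, fun _ _ hy hxy => lt_of_le_of_lt hxy hy⟩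

/-- `γ⁺`, the cut with left part `(-∞, γ]`. -/
def rcut (γ : G) : Cut G := ⟨{x | x ≤ γ}, fun _ _ hy hxy => le_trans hxy hy⟩

/-- The left sum of cuts: the smallest cut whose left part contains all `λ + γ`
with `λ < Λ`, `γ < Γ`. -/
instance : Add (Cut G) :=
  ⟨fun Λ Γ => ⟨{x | ∃ l ∈ Λ.L, ∃ g ∈ Γ.L, x ≤ l + g}, by
    rintro x y ⟨l, hl, g, hg, hy⟩ hxy
    exact ⟨l, hl, g, hg, hxy.trans hy⟩⟩⟩

/-- The right sum of cuts: the largest cut whose right part contains all `λ + γ`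
with `λ > Λ`, `γ > Γ`. -/
def addR (Λ Γ : Cut G) : Cut G :=
  ⟨{x | ∀ l ∉ Λ.L, ∀ g ∉ Γ.L, x < l + g}, by
    intro x y hy hxy l hl g hg
    exact lt_of_le_of_lt hxy (hy l hl g hg)⟩

/-- The right difference of cuts: the largest cut whose right part contains all
`λ − γ` with `λ > Λ`, `γ < Γ`. -/
def sub (Λ Γ : Cut G) : Cut G :=
  ⟨{x | ∀ l ∉ Λ.L, ∀ g ∈ Γ.L, x < l - g}, by
    intro x y hy hxy l hl g hg
    exact lt_of_le_of_lt hxy (hy l hl g hg)⟩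

/-- Translation `γ + Λ` of a cut by a group element, with left part `{γ + λ : λ ∈ Λ^L}`. -/
def transl (γ : G) (Λ : Cut G) : Cut G :=
  ⟨(fun x => γ + x) '' Λ.L, by
    rintro x y ⟨l, hl, rfl⟩ hxy
    exact ⟨x - γ, Λ.lower hl (sub_le_iff_le_add'.mpr hxy), by show γ + (x - γ) = x; rw [add_comm, sub_add_cancel]⟩⟩

/-- Negation of a cut: `-Λ = (-Λ^R, -Λ^L)`. -/
def neg (Λ : Cut G) : Cut G :=
  ⟨{x | -x ∉ Λ.L}, by
    intro x y hy hxy hx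
    exact hy (Λ.lower hx (neg_le_neg hxy))⟩

/-- The `n`-fold left sum `Λ + Γ + ⋯ + Γ` (`Γ` added `n` times). -/
def addn (Λ Γ : Cut G) : ℕ → Cut G
  | 0 => Λ
  | n + 1 => addn Λ Γ n + Γ

/-- The `n`-fold right difference `Λ − Γ − ⋯ − Γ` (`Γ` subtracted `n` times). -/
def subn (Λ Γ : Cut G) : ℕ → Cut G
  | 0 => Λ
  | n + 1 => (subn Λ Γ n).sub Γ

/-- `nΓ = Γ + ⋯ + Γ` (`n` times); by convention `0 • Γ = 0⁺`, the neutral element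
of the left sum. -/
def nsmul : ℕ → Cut G → Cut G
  | 0, _ => rcut 0
  | 1, Γ => Γ
  | n + 2, Γ => nsmul (n + 1) Γ + Γ

/-- `ℤ`-multiples of a cut: `(-n)Γ := -(nΓ)`. -/
def zsmul (n : ℤ) (Γ : Cut G) : Cut G :=
  if 0 ≤ n then nsmul n.toNat Γ else (nsmul (-n).toNat Γ).neg

/-- `ℤΓ := sup {nΓ : n ∈ ℤ}`. -/
def zmul (Γ : Cut G) : Cut G :=
  ⟨⋃ n : ℤ, (zsmul n Γ).L, by
    intro x y hy hxy
    rcases Set.mem_iUnion.1 hy with ⟨n, hn⟩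
    exact Set.mem_iUnion.2 ⟨n, (zsmul n Γ).lower hn hxy⟩⟩

/-- `S⁺`: the smallest cut whose left part contains the set `S`. -/
def ofSet (s : Set G) : Cut G :=
  ⟨{x | ∃ γ ∈ s, x ≤ γ}, by
    rintro x y ⟨γ, hγ, hy⟩ hxy
    exact ⟨γ, hγ, hxy.trans hy⟩⟩

/-- The supremum (maximum) of two cuts. -/
def max (Λ Γ : Cut G) : Cut G :=
  ⟨Λ.L ∪ Γ.L, by
    rintro x y (hy | hy) hxy
    · exact Or.inl (Λ.lower hy hxy)
    · exact Or.inr (Γ.lower hy hxy)⟩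

/-- The infimum of a set of cuts. -/
def inf (s : Set (Cut G)) : Cut G :=
  ⟨{x | ∀ Λ ∈ s, x ∈ Λ.L}, by
    intro x y hy hxy Λ hΛ
    exact Λ.lower (hy Λ hΛ) hxy⟩

end Cut

/-- A valued field `K` (of equal characteristic) with value group `G`, a value group
section `t`, and an embedded residue field `k ⊆ K` (the residue field section is the
inclusion). The valuation is written additively, with `v 0 = ⊤`. -/
structure VData (K : Type u) (G : Type v) [Field K] [AddCommGroup G] [LinearOrder G] [IsOrderedAddMonoid G] where
  v : K → WithTop G
  k : Subfield K
  t : G → K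
  v_eq_top : ∀ x : K, v x = ⊤ ↔ x = 0
  v_mul : ∀ x y : K, v (x * y) = v x + v y
  v_sub : ∀ x y : K, min (v x) (v y) ≤ v (x - y)
  v_surj : ∀ γ : G, ∃ x : K, v x = (γ : WithTop G)
  v_t : ∀ γ : G, v (t γ) = (γ : WithTop G)
  t_neg : ∀ γ : G, t (-γ) = (t γ)⁻¹
  v_k : ∀ c ∈ k, c ≠ 0 → v c = (0 : WithTop G)
  k_res : ∀ x : K, v x = (0 : WithTop G) → ∃ c ∈ k, (0 : WithTop G) < v (x - c)

namespace VData

variable {K : Type u} {G : Type v} [Field K] [AddCommGroup G] [LinearOrder G] [IsOrderedAddMonoid G]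

/-- `O[Λ] = {x ∈ K : v(x) > Λ}`, the (possibly fractional) ideal of the valuation
ring associated with the cut `Λ`. -/
def Oc (S : VData K G) (Λ : Cut G) : Set K :=
  {x | ∀ γ : G, S.v x = (γ : WithTop G) → γ ∉ Λ.L}

/-- `O_R[Λ] = {x ∈ R : v(x) > Λ}`, for a subring `R` of `K`. -/
def OcR (S : VData K G) (R : Subring K) (Λ : Cut G) : Set K :=
  {x | x ∈ R ∧ ∀ γ : G, S.v x = (γ : WithTop G) → γ ∉ Λ.L}

end VData

/-- Axioms CA–CD of a (weak) tower of complements for the valued field `K`: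
each `A[Λ]` is a `k`-subspace of `K` (CA), `A[Λ] ⊕ O[Λ] = K` (CB),
`t(γ)·k ⊆ A[γ⁺]` (CC), and `Γ ≤ Λ ↔ A[Γ] ⊆ A[Λ]` (CD). -/
structure TowerBase {K : Type u} {G : Type v} [Field K] [AddCommGroup G] [LinearOrder G] [IsOrderedAddMonoid G]
    (S : VData K G) where
  A : Cut G → Set K
  zero_mem : ∀ Λ : Cut G, (0 : K) ∈ A Λ
  add_mem : ∀ Λ : Cut G, ∀ x ∈ A Λ, ∀ y ∈ A Λ, x + y ∈ A Λ
  smul_mem : ∀ Λ : Cut G, ∀ c ∈ S.k, ∀ x ∈ A Λ, c * x ∈ A Λ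
  disj : ∀ Λ : Cut G, ∀ x ∈ A Λ, x ∈ S.Oc Λ → x = 0
  spans : ∀ Λ : Cut G, ∀ x : K, ∃ a ∈ A Λ, ∃ o ∈ S.Oc Λ, x = a + o
  sec_mem : ∀ γ : G, ∀ c ∈ S.k, c * S.t γ ∈ A (Cut.rcut γ)
  mono : ∀ Γ Λ : Cut G, Γ ≤ Λ ↔ A Γ ⊆ A Λ

/-- A weak tower of complements: CA–CD together with CF (`A[γ+Λ] = t(γ)·A[Λ]`). -/
structure WeakTower {K : Type u} {G : Type v} [Field K] [AddCommGroup G] [LinearOrder G] [IsOrderedAddMonoid G]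
    (S : VData K G) extends TowerBase S where
  transl_eq : ∀ (γ : G) (Λ : Cut G),
    A (Cut.transl γ Λ) = (fun x => S.t γ * x) '' A Λ

/-- A tower of complements: CA–CD together with the multiplicativity axiom CE
(`A[Λ]·A[Γ] ⊆ A[Λ+Γ]`). -/
structure Tower {K : Type u} {G : Type v} [Field K] [AddCommGroup G] [LinearOrder G] [IsOrderedAddMonoid G]
    (S : VData K G) extends TowerBase S where
  mul_mem : ∀ Λ Γ : Cut G, ∀ x ∈ A Λ, ∀ y ∈ A Γ, x * y ∈ A (Λ + Γ)

/-- Axioms CA–CD of a (weak) tower of complements for a subring `R` of `K`. -/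
structure RTowerBase {K : Type u} {G : Type v} [Field K] [AddCommGroup G] [LinearOrder G] [IsOrderedAddMonoid G]
    (S : VData K G) (R : Subring K) where
  A : Cut G → Set K
  subset_R : ∀ Λ : Cut G, A Λ ⊆ (R : Set K)
  zero_mem : ∀ Λ : Cut G, (0 : K) ∈ A Λ
  add_mem : ∀ Λ : Cut G, ∀ x ∈ A Λ, ∀ y ∈ A Λ, x + y ∈ A Λ
  smul_mem : ∀ Λ : Cut G, ∀ c ∈ S.k, ∀ x ∈ A Λ, c * x ∈ A Λ
  disj : ∀ Λ : Cut G, ∀ x ∈ A Λ, x ∈ S.OcR R Λ → x = 0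
  spans : ∀ Λ : Cut G, ∀ x ∈ R, ∃ a ∈ A Λ, ∃ o ∈ S.OcR R Λ, x = a + o
  sec_mem : ∀ γ : G, ∀ c ∈ S.k, c * S.t γ ∈ A (Cut.rcut γ)
  mono : ∀ Γ Λ : Cut G, Γ ≤ Λ ↔ A Γ ⊆ A Λ

/-- A weak tower of complements for a subring `R` of `K`: CA–CD together with CF. -/
structure RWeakTower {K : Type u} {G : Type v} [Field K] [AddCommGroup G] [LinearOrder G] [IsOrderedAddMonoid G]
    (S : VData K G) (R : Subring K) extends RTowerBase S R where
  transl_eq : ∀ (γ : G) (Λ : Cut G),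
    A (Cut.transl γ Λ) = (fun x => S.t γ * x) '' A Λ

namespace RTowerBase

variable {K : Type u} {G : Type v} [Field K] [AddCommGroup G] [LinearOrder G] [IsOrderedAddMonoid G]
  {S : VData K G} {R : Subring K}

/-- The support of `x ∈ R` with respect to a (weak) tower of complements:
`γ ∈ supp x` iff the coefficient `a_γ(x)` in the decomposition
`x = x₁ + a_γ(x) t(γ) + x₃` (with `x₁ ∈ A[γ⁻]`, `v(x₃) > γ`) is nonzero, i.e.
iff `x ∉ A[γ⁻] + O[γ⁺]`. -/
def supp (T : RTowerBase S R) (x : K) : Set G :=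
  {γ | ¬ ∃ a ∈ T.A (Cut.lcut γ), ∃ o ∈ S.OcR R (Cut.rcut γ), x = a + o}

/-- `μ(x) := (supp x)⁺`, the smallest cut whose left part contains the support. -/
def mu (T : RTowerBase S R) (x : K) : Cut G :=
  Cut.ofSet (T.supp x)

end RTowerBase

namespace TowerBase

variable {K : Type u} {G : Type v} [Field K] [AddCommGroup G] [LinearOrder G] [IsOrderedAddMonoid G]
  {S : VData K G}

/-- `μ(x) := inf {Λ : x ∈ A[Λ]}`. -/
def muInf (T : TowerBase S) (x : K) : Cut G :=
  Cut.inf {Λ | x ∈ T.A Λ}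

end TowerBase

namespace RTowerBase

variable {K : Type u} {G : Type v} [Field K] [AddCommGroup G] [LinearOrder G] [IsOrderedAddMonoid G]
  {S : VData K G} {R : Subring K}

/-- `μ(x) := inf {Λ : x ∈ A[Λ]}`. -/
def muInf (T : RTowerBase S R) (x : K) : Cut G :=
  Cut.inf {Λ | x ∈ T.A Λ}

end RTowerBase

namespace CutAux

variable {G : Type u} [AddCommGroup G] [LinearOrder G] [IsOrderedAddMonoid G]

lemma sub_add_mem {Θ Γ : Cut G} {a g : G} (ha : a ∈ (Θ.sub Γ).L) (hg : g ∈ Γ.L) :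
    a + g ∈ Θ.L := by
  by_contra h
  have := ha (a + g) h g hg
  simp at this

lemma subn_list_mem {Θ Γ : Cut G} {a : G} (l : List G) (hl : ∀ g ∈ l, g ∈ Γ.L)
    (ha : a ∈ (Cut.subn Θ Γ l.length).L) : a + l.sum ∈ Θ.L := by
  induction l generalizing a with
  | nil => simpa [Cut.subn] using ha
  | cons g t ih =>
    have ha' : a + g ∈ (Cut.subn Θ Γ t.length).L :=
      sub_add_mem ha (hl g (List.mem_cons_self ..))
    have h2 := ih (fun x hx => hl x (List.mem_cons_of_mem _ hx)) ha'
    rw [List.sum_cons, ← add_assoc]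
    exact h2

lemma mem_subn_of_forall {Θ Γ : Cut G} {x : G} (n : ℕ)
    (h : ∀ l : List G, l.length = n → (∀ g ∈ l, g ∈ Γ.L) → x + l.sum ∈ Θ.L) :
    x ∈ (Cut.subn Θ Γ n).L := by
  induction n generalizing x with
  | zero => simpa [Cut.subn] using h [] rfl (by simp)
  | succ n ih =>
    intro l hl g hg
    have hx : x + g ∈ (Cut.subn Θ Γ n).L := by
      apply ih
      intro t ht htmem
      have h3 := h (g :: t) (by simp [ht]) (by
        intro y hy
        rcases List.mem_cons.mp hy with rfl | hy
        · exact hg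
        · exact htmem y hy)
      rw [List.sum_cons, ← add_assoc] at h3
      exact h3
    have hlt : x + g < l := by
      by_contra hcon
      exact hl ((Cut.subn Θ Γ n).lower hx (not_lt.mp hcon))
    exact lt_sub_iff_add_lt.mpr hlt

lemma nsmul_exists {Γ : Cut G} : ∀ (m : ℕ) (c : G), 1 ≤ m → c ∈ (Cut.nsmul m Γ).L →
    ∃ l : List G, l.length = m ∧ (∀ g ∈ l, g ∈ Γ.L) ∧ c ≤ l.sum
  | 1, c, _, hc => ⟨[c], rfl, by simpa [Cut.nsmul] using hc, by simp⟩
  | (n+2), c, _, hc => by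
    rcases hc with ⟨u, hu, g, hg, hcu⟩
    obtain ⟨l, hlen, hmem, hsum⟩ := nsmul_exists (n+1) u (by omega) hu
    refine ⟨l ++ [g], by simp [hlen], ?_, ?_⟩
    · intro y hy
      rcases List.mem_append.mp hy with hy | hy
      · exact hmem y hy
      · simp at hy; subst hy; exact hg
    · rw [List.sum_append, List.sum_cons, List.sum_nil, add_zero]
      exact hcu.trans (add_le_add_left hsum g)

end CutAux

/-- For cuts `Λ, Λ', Γ` and naturals `i, j, k, m, d` with
`i, j, k < m` and `i + j = m + d`:
`(Λ − iΓ) + (Λ' − jΓ) + (mΓ − kΓ) ≤ (Λ + Λ') − (d+k)Γ`. -/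
theorem cut_d_k_m_i_j {G : Type u} [AddCommGroup G] [LinearOrder G] [IsOrderedAddMonoid G]
    (Λ Λ' Γ : Cut G) (i j k m d : ℕ)
    (hi : i < m) (hj : j < m) (hk : k < m) (hij : i + j = m + d) :
    Cut.subn Λ Γ i + Cut.subn Λ' Γ j + Cut.subn (Cut.nsmul m Γ) Γ k ≤
      Cut.subn (Λ + Λ') Γ (d + k) := by
  intro x hx
  obtain ⟨w, hw, c, hc, hxwc⟩ := hx
  obtain ⟨a, ha, b, hb, hwab⟩ := hw
  apply CutAux.mem_subn_of_forall
  intro l hlen hmem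
  set Ld := l.take d with hLd
  set Lk := l.drop d with hLk
  have hLklen : Lk.length = k := by simp [hLk, hlen]
  have hck : c ∈ (Cut.subn (Cut.nsmul m Γ) Γ Lk.length).L := by rwa [hLklen]
  have hcm : c + Lk.sum ∈ (Cut.nsmul m Γ).L :=
    CutAux.subn_list_mem Lk (fun g hg => hmem g (List.mem_of_mem_drop hg)) hck
  obtain ⟨H, hHlen, hHmem, hHsum⟩ := CutAux.nsmul_exists m (c + Lk.sum) (by omega) hcm
  set Hi := H.take i with hHi
  set Hj := H.drop i with hHj
  have hHilen : Hi.length = i := by simp [hHi, hHlen]; omega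
  have hHjlen : (Hj ++ Ld).length = j := by simp [hHj, hHlen, hLd, hlen]; omega
  have haΛ : a + Hi.sum ∈ Λ.L := by
    apply CutAux.subn_list_mem Hi (fun g hg => hHmem g (List.mem_of_mem_take hg))
    rwa [hHilen]
  have hbΛ' : b + (Hj ++ Ld).sum ∈ Λ'.L := by
    apply CutAux.subn_list_mem (Hj ++ Ld) ?_ (by rwa [hHjlen])
    intro g hg
    rcases List.mem_append.mp hg with hg | hg
    · exact hHmem g (List.mem_of_mem_drop hg)
    · exact hmem g (List.mem_of_mem_take hg)
  refine ⟨a + Hi.sum, haΛ, b + (Hj ++ Ld).sum, hbΛ', ?_⟩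
  have hlsplit : l.sum = Ld.sum + Lk.sum := (List.sum_take_add_sum_drop l d).symm
  have hHsplit : H.sum = Hi.sum + Hj.sum := (List.sum_take_add_sum_drop H i).symm
  have h1 : x ≤ a + b + c := le_trans hxwc (add_le_add_left hwab c)
  have h2 : c + Lk.sum ≤ Hi.sum + Hj.sum := by rw [← hHsplit]; exact hHsum
  rw [List.sum_append]
  calc x + l.sum = x + (Ld.sum + Lk.sum) := by rw [hlsplit]
    _ ≤ (a + b + c) + (Ld.sum + Lk.sum) := add_le_add_left h1 _
    _ = (a + b) + (c + Lk.sum) + Ld.sum := by abel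
    _ ≤ (a + b) + (Hi.sum + Hj.sum) + Ld.sum :=
        add_le_add_left (add_le_add_right h2 _) _
    _ = a + Hi.sum + (b + (Hj.sum + Ld.sum)) := by abel
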